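/- Let x : ℤ → ℤ be a sequence of integers with x_k ≥ -1 for every k ∈ ℤ. Let i be an integer such that y(m,i) < 0 for some m < i, and suppose n := x_{i-1} + 1 > 0, so that i has exactly n children i_n < i_{n-1} < ⋯ < i_1 in the record graph of x. Then for every m with 1 ≤ m ≤ n: (a) the m-th child satisfies m = x_{i-1} + 1 - y(i_m, i); and (b) an integer j < i equals i_m if and only if j is the largest integer below i with y(j,i) = x_{i-1} + 1 - m. -/
import Mathlib


/-- The record map of an integer-valued sequence `x : ℤ → ℤ`: `recordMap x i` is the least
`n > i` such that `∑_{l=i}^{n-1} x l ≥ 0` if such an `n` exists, and `i` otherwise. -/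
noncomputable def recordMap (x : ℤ → ℤ) (i : ℤ) : ℤ := by
  classical
  exact if ∃ n, i < n ∧ 0 ≤ ∑ l ∈ Finset.Ico i n, x l then
    sInf {n : ℤ | i < n ∧ 0 ≤ ∑ l ∈ Finset.Ico i n, x l}
  else i

/-- `j` is a child of `i` in the record graph of `x`. -/
noncomputable def IsChild (x : ℤ → ℤ) (i j : ℤ) : Prop :=
  j ≠ i ∧ recordMap x j = i

/-- `j` is the `m`-th child of `i` (children being listed in decreasing order
`i_1 > i_2 > ⋯`), i.e. `j` is a child of `i` and exactly `m - 1` children of `i`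
are greater than `j`. -/
noncomputable def IsMthChild (x : ℤ → ℤ) (i : ℤ) (m : ℕ) (j : ℤ) : Prop :=
  IsChild x i j ∧ {k : ℤ | IsChild x i k ∧ j < k}.ncard = m - 1

section Aux


variable (x : ℤ → ℤ)

lemma sum_Ico_split {j k i : ℤ} (h1 : j ≤ k) (h2 : k ≤ i) :
    ∑ l ∈ Finset.Ico j i, x l
      = (∑ l ∈ Finset.Ico j k, x l) + ∑ l ∈ Finset.Ico k i, x l := by
  rw [← Finset.Ico_union_Ico_eq_Ico h1 h2,
    Finset.sum_union (Finset.Ico_disjoint_Ico_consecutive j k i)]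

lemma sum_Ico_singleton (j : ℤ) : ∑ l ∈ Finset.Ico j (j+1), x l = x j := by
  have : Finset.Ico j (j+1) = {j} := by
    ext k; simp [Finset.mem_Ico]; omega
  simp [this]

lemma isChild_iff (i j : ℤ) :
    IsChild x i j ↔ j < i ∧ 0 ≤ ∑ l ∈ Finset.Ico j i, x l ∧
      ∀ k, j < k → k < i →
        ∑ l ∈ Finset.Ico j i, x l < ∑ l ∈ Finset.Ico k i, x l := by
  classical
  set S : Set ℤ := {n : ℤ | j < n ∧ 0 ≤ ∑ l ∈ Finset.Ico j n, x l} with hS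
  have hbdd : BddBelow S := ⟨j, fun n hn => le_of_lt hn.1⟩
  constructor
  · rintro ⟨hne, hr⟩
    unfold recordMap at hr
    by_cases hex : ∃ n, j < n ∧ 0 ≤ ∑ l ∈ Finset.Ico j n, x l
    · rw [if_pos hex] at hr
      have hSne : S.Nonempty := hex
      change sInf S = i at hr
      have hmem : sInf S ∈ S := Int.csInf_mem hSne hbdd
      rw [hr] at hmem
      obtain ⟨hji, hge⟩ := hmem
      refine ⟨hji, hge, fun k hjk hki => ?_⟩
      have hk : k ∉ S := by
        intro hkS
        have h2 := csInf_le hbdd hkS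
        rw [hr] at h2
        omega
      have hkneg : ∑ l ∈ Finset.Ico j k, x l < 0 := by
        by_contra hc
        exact hk ⟨hjk, by omega⟩
      have hsplit := sum_Ico_split x (le_of_lt hjk) (le_of_lt hki)
      omega
    · rw [if_neg hex] at hr; exact absurd hr hne
  · rintro ⟨hji, hge, hmin⟩
    have hiS : i ∈ S := ⟨hji, hge⟩
    have hex : ∃ n, j < n ∧ 0 ≤ ∑ l ∈ Finset.Ico j n, x l := ⟨i, hiS⟩
    have hle : ∀ n ∈ S, i ≤ n := by
      intro n hn
      by_contra hc
      push_neg at hc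
      have hjn : j < n := hn.1
      have hsplit := sum_Ico_split x (le_of_lt hjn) (le_of_lt hc)
      have := hmin n hjn hc
      have := hn.2
      omega
    have : sInf S = i := le_antisymm (csInf_le hbdd hiS) (le_csInf ⟨i, hiS⟩ hle)
    refine ⟨ne_of_lt hji, ?_⟩
    unfold recordMap
    rw [if_pos hex]
    exact this

lemma child_val_lt (i j k : ℤ) (hj : IsChild x i j) (hk : IsChild x i k) (hjk : j < k) :
    ∑ l ∈ Finset.Ico j i, x l < ∑ l ∈ Finset.Ico k i, x l := by
  rw [isChild_iff] at hj hk
  exact hj.2.2 k hjk hk.1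

lemma child_lt_of_val_lt (i j k : ℤ) (hj : IsChild x i j) (hk : IsChild x i k)
    (h : ∑ l ∈ Finset.Ico j i, x l < ∑ l ∈ Finset.Ico k i, x l) : j < k := by
  rcases lt_trichotomy j k with h1 | h1 | h1
  · exact h1
  · subst h1; omega
  · have := child_val_lt x i k j hk hj h1; omega

lemma child_val_le (i j : ℤ) (hj : IsChild x i j) :
    ∑ l ∈ Finset.Ico j i, x l ≤ x (i - 1) := by
  rw [isChild_iff] at hj
  obtain ⟨hji, _, hmin⟩ := hj
  have hval : ∑ l ∈ Finset.Ico (i-1) i, x l = x (i-1) := by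
    have h2 := sum_Ico_singleton x (i-1)
    have h3 : i - 1 + 1 = i := by omega
    rw [h3] at h2
    exact h2
  rcases eq_or_lt_of_le (by omega : j ≤ i - 1) with h1 | h1
  · rw [h1, hval]
  · have := hmin (i-1) h1 (by omega)
    omega

/-- Existence of the child with value `v`, as the largest `j < i` with partial sum `≤ v`. -/
lemma exists_child_with_val (hx : ∀ k : ℤ, -1 ≤ x k) (i : ℤ)
    (h : ∃ m < i, ∑ l ∈ Finset.Ico m i, x l < 0)
    (v : ℤ) (hv0 : 0 ≤ v) (hv1 : v ≤ x (i-1)) :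
    ∃ j, IsChild x i j ∧ (∑ l ∈ Finset.Ico j i, x l = v) ∧
      ∀ k, j < k → k < i → v < ∑ l ∈ Finset.Ico k i, x l := by
  obtain ⟨m, hmi, hmneg⟩ := h
  set P : ℤ → Prop := fun j => j < i ∧ ∑ l ∈ Finset.Ico j i, x l ≤ v with hP
  obtain ⟨j, hjP, hjmax⟩ := Int.exists_greatest_of_bdd
    (⟨i, fun z hz => le_of_lt hz.1⟩ : ∃ b, ∀ z, P z → z ≤ b)
    ⟨m, hmi, by omega⟩
  obtain ⟨hji, hjv⟩ := hjP
  have hgt : ∀ k, j < k → k < i → v < ∑ l ∈ Finset.Ico k i, x l := by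
    intro k hjk hki
    by_contra hc
    have := hjmax k ⟨hki, by omega⟩
    omega
  have hval : ∑ l ∈ Finset.Ico j i, x l = v := by
    rcases eq_or_lt_of_le (by omega : j + 1 ≤ i) with h1 | h1
    · -- j = i - 1
      have hj1 : j = i - 1 := by omega
      subst hj1
      have h2 := sum_Ico_singleton x (i-1)
      rw [h1] at h2
      omega
    · have hs := hgt (j+1) (by omega) h1
      have hsplit := sum_Ico_split x (by omega : j ≤ j + 1) (le_of_lt h1)
      rw [sum_Ico_singleton] at hsplit
      have := hx j
      omega
  refine ⟨j, ?_, hval, hgt⟩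
  rw [isChild_iff]
  refine ⟨hji, by omega, fun k hjk hki => ?_⟩
  rw [hval]; exact hgt k hjk hki

lemma ncard_children_gt (hx : ∀ k : ℤ, -1 ≤ x k) (i : ℤ)
    (h : ∃ m < i, ∑ l ∈ Finset.Ico m i, x l < 0)
    (j : ℤ) (hj : IsChild x i j) :
    {k : ℤ | IsChild x i k ∧ j < k}.ncard
      = (x (i-1) - ∑ l ∈ Finset.Ico j i, x l).toNat := by
  set v := ∑ l ∈ Finset.Ico j i, x l with hv
  set S : Set ℤ := {k : ℤ | IsChild x i k ∧ j < k} with hS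
  set g : ℤ → ℤ := fun k => ∑ l ∈ Finset.Ico k i, x l with hg
  have hinj : Set.InjOn g S := by
    intro a ha b hb hab
    rcases lt_trichotomy a b with h1 | h1 | h1
    · have := child_val_lt x i a b ha.1 hb.1 h1; simp only [hg] at hab; omega
    · exact h1
    · have := child_val_lt x i b a hb.1 ha.1 h1; simp only [hg] at hab; omega
  have himg : g '' S = ↑(Finset.Ioc v (x (i-1))) := by
    ext w
    simp only [Set.mem_image, Finset.coe_Ioc, Set.mem_Ioc]
    constructor
    · rintro ⟨k, ⟨hk, hjk⟩, rfl⟩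
      exact ⟨child_val_lt x i j k hj hk hjk, child_val_le x i k hk⟩
    · rintro ⟨hw1, hw2⟩
      have hv0 : 0 ≤ v := ((isChild_iff x i j).mp hj).2.1
      obtain ⟨k, hk, hkval, _⟩ := exists_child_with_val x hx i h w (by omega) hw2
      refine ⟨k, ⟨hk, ?_⟩, hkval⟩
      exact child_lt_of_val_lt x i j k hj hk (by omega)
  have := Set.ncard_image_of_injOn hinj
  rw [himg, Set.ncard_coe_finset, Int.card_Ioc] at this
  exact this.symm

end Aux

/-- Positions of the children for a skip-free to the left sequence: if some past partial sum
`y(m,i)` is negative and `n := x (i-1) + 1 > 0` (so `i` has exactly `n` children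
`i_n < ⋯ < i_1`), then for every `1 ≤ m ≤ n`: (a) the `m`-th child `i_m` satisfies
`m = x (i-1) + 1 - y(i_m, i)`; and (b) an integer `j < i` is the `m`-th child of `i` iff `j`
is the largest integer below `i` with `y(j,i) = x (i-1) + 1 - m`. -/
theorem mth_child_characterization (x : ℤ → ℤ) (hx : ∀ k : ℤ, -1 ≤ x k) (i : ℤ)
    (h : ∃ m < i, ∑ l ∈ Finset.Ico m i, x l < 0)
    (hn : 0 < x (i - 1) + 1)
    (m : ℕ) (hm1 : 1 ≤ m) (hm2 : (m : ℤ) ≤ x (i - 1) + 1) :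
    (∀ j : ℤ, IsMthChild x i m j →
        (m : ℤ) = x (i - 1) + 1 - ∑ l ∈ Finset.Ico j i, x l) ∧
    (∀ j : ℤ, j < i →
        (IsMthChild x i m j ↔
          (∑ l ∈ Finset.Ico j i, x l = x (i - 1) + 1 - m ∧
            ∀ k : ℤ, j < k → k < i →
              ∑ l ∈ Finset.Ico k i, x l ≠ x (i - 1) + 1 - m))) := by
  have key : ∀ j : ℤ, IsMthChild x i m j →
      (m : ℤ) = x (i - 1) + 1 - ∑ l ∈ Finset.Ico j i, x l := by
    intro j ⟨hj, hcard⟩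
    have hle := child_val_le x i j hj
    have := ncard_children_gt x hx i h j hj
    rw [hcard] at this
    omega
  refine ⟨key, fun j hji => ⟨fun hmth => ?_, fun ⟨hval, hno⟩ => ?_⟩⟩
  · have ha := key j hmth
    obtain ⟨hj, _⟩ := hmth
    rw [isChild_iff] at hj
    refine ⟨by omega, fun k hjk hki => ?_⟩
    have := hj.2.2 k hjk hki
    omega
  · obtain ⟨j', hj', hval', hgt'⟩ := exists_child_with_val x hx i h
      (x (i-1) + 1 - m) (by omega) (by omega)
    have hjj' : j = j' := by
      rcases lt_trichotomy j j' with h1 | h1 | h1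
      · have hj'i : j' < i := ((isChild_iff x i j').mp hj').1
        exact absurd hval' (hno j' h1 hj'i)
      · exact h1
      · have := hgt' j h1 hji; omega
    subst hjj'
    refine ⟨hj', ?_⟩
    rw [ncard_children_gt x hx i h j hj', hval]
    omega
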